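/- Let M, N be positive integers, h > 0, τ > 0, μ ≥ 0, γ ≥ 0, ν ≥ 0 and κ ∈ ℝ. Suppose the periodic grid functions u^k, v^k (0 ≤ k ≤ N) satisfy the compact scheme. Then the numerical solution is uniformly bounded: for every 1 ≤ k ≤ N, ‖u^k‖² ≤ 2·(‖u⁰‖² + μ·|u⁰|₁² + (μh²/12)·‖v⁰‖² − (μh⁴/144)·|v⁰|₁²). (Boundedness remark following Theorem 4.1, derived from the energy identities (21)–(22).) -/

import Mathlib

open Finset

namespace BBMB

/-- A periodic grid function with period `M`. -/
def Periodic (M : ℕ) (u : ℤ → ℝ) : Prop := ∀ i : ℤ, u (i + (M : ℤ)) = u i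

/-- Forward difference `δ_x u_{i+1/2} = (u_{i+1} - u_i)/h`. -/
noncomputable def dxp (h : ℝ) (u : ℤ → ℝ) (i : ℤ) : ℝ := (u (i + 1) - u i) / h

/-- Backward difference `δ_x u_{i-1/2} = (u_i - u_{i-1})/h`. -/
noncomputable def dxm (h : ℝ) (u : ℤ → ℝ) (i : ℤ) : ℝ := (u i - u (i - 1)) / h

/-- Second difference `δ_x² u_i = (u_{i+1} - 2 u_i + u_{i-1})/h²`. -/
noncomputable def dxx (h : ℝ) (u : ℤ → ℝ) (i : ℤ) : ℝ :=
  (u (i + 1) - 2 * u i + u (i - 1)) / h ^ 2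

/-- Centered difference `Δ_x u_i = (u_{i+1} - u_{i-1})/(2h)`. -/
noncomputable def Dx (h : ℝ) (u : ℤ → ℝ) (i : ℤ) : ℝ := (u (i + 1) - u (i - 1)) / (2 * h)

/-- Discrete inner product `(u, w) = h ∑_{i=1}^{M} u_i w_i`. -/
noncomputable def ip (M : ℕ) (h : ℝ) (u w : ℤ → ℝ) : ℝ :=
  h * ∑ i ∈ Finset.Icc (1 : ℤ) (M : ℤ), u i * w i

/-- Discrete inner product `⟨δ_x u, δ_x w⟩ = h ∑_{i=1}^{M} (δ_x u_{i-1/2})(δ_x w_{i-1/2})`. -/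
noncomputable def dip (M : ℕ) (h : ℝ) (u w : ℤ → ℝ) : ℝ :=
  h * ∑ i ∈ Finset.Icc (1 : ℤ) (M : ℤ), dxm h u i * dxm h w i

/-- Discrete `L²` norm `‖u‖ = √((u,u))`. -/
noncomputable def nrm (M : ℕ) (h : ℝ) (u : ℤ → ℝ) : ℝ := Real.sqrt (ip M h u u)

/-- Discrete `H¹` seminorm `|u|₁ = √(⟨δ_x u, δ_x u⟩)`. -/
noncomputable def snorm (M : ℕ) (h : ℝ) (u : ℤ → ℝ) : ℝ := Real.sqrt (dip M h u u)

/-- Trilinear term `ψ(u,v)_i = (1/3) (u_i Δ_x v_i + Δ_x (u·v)_i)`. -/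
noncomputable def psi (h : ℝ) (u v : ℤ → ℝ) (i : ℤ) : ℝ :=
  (1 / 3) * (u i * Dx h v i + Dx h (fun j => u j * v j) i)

/-- Average of two grid functions. -/
noncomputable def half (w0 w1 : ℤ → ℝ) : ℤ → ℝ := fun i => (w0 i + w1 i) / 2

/-- The three-level linearized compact difference scheme (17)–(20a). -/
def SatisfiesScheme (M N : ℕ) (h τ μ γ κ ν : ℝ) (u v : ℕ → ℤ → ℝ) : Prop :=
  (∀ k ≤ N, Periodic M (u k) ∧ Periodic M (v k)) ∧
  (∀ k ≤ N, ∀ i : ℤ, v k i = dxx h (u k) i - h ^ 2 / 12 * dxx h (v k) i) ∧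
  (∀ i : ℤ,
    (u 1 i - u 0 i) / τ - μ * (v 1 i - v 0 i) / τ
      + γ * (psi h (u 0) (half (u 0) (u 1)) i
             - h ^ 2 / 2 * psi h (v 0) (half (u 0) (u 1)) i)
      + κ * (Dx h (half (u 0) (u 1)) i - h ^ 2 / 6 * Dx h (half (v 0) (v 1)) i)
      - ν * half (v 0) (v 1) i = 0) ∧
  (∀ k : ℕ, 1 ≤ k → k + 1 ≤ N → ∀ i : ℤ,
    (u (k + 1) i - u (k - 1) i) / (2 * τ) - μ * (v (k + 1) i - v (k - 1) i) / (2 * τ)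
      + γ * (psi h (u k) (half (u (k - 1)) (u (k + 1))) i
             - h ^ 2 / 2 * psi h (v k) (half (u (k - 1)) (u (k + 1))) i)
      + κ * (Dx h (half (u (k - 1)) (u (k + 1))) i
             - h ^ 2 / 6 * Dx h (half (v (k - 1)) (v (k + 1))) i)
      - ν * half (v (k - 1)) (v (k + 1)) i = 0)

section Aux

lemma iz1 : ∀ j : ℤ, j + 1 - 1 = j := fun j => by ring
lemma iz2 : ∀ j : ℤ, j - 1 + 1 = j := fun j => by ring
lemma iz3 : ∀ j : ℤ, j + 1 + 1 = j + 2 := fun j => by ring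
lemma iz4 : ∀ j : ℤ, j - 1 - 1 = j - 2 := fun j => by ring

lemma sum_shift (M : ℕ) (hM : 0 < M) (f : ℤ → ℝ) (hf : ∀ i : ℤ, f (i + (M : ℤ)) = f i) :
    ∑ i ∈ Finset.Icc (1 : ℤ) (M : ℤ), f (i + 1) = ∑ i ∈ Finset.Icc (1 : ℤ) (M : ℤ), f i := by
  have hM1 : (1 : ℤ) ≤ (M : ℤ) := by exact_mod_cast hM
  have e1 : Finset.Icc (1 : ℤ) (M : ℤ) = insert 1 (Finset.Icc 2 (M : ℤ)) := by
    ext i; simp only [Finset.mem_Icc, Finset.mem_insert]; omega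
  have e2 : Finset.Icc (2 : ℤ) ((M : ℤ) + 1) = insert ((M : ℤ) + 1) (Finset.Icc 2 (M : ℤ)) := by
    ext i; simp only [Finset.mem_Icc, Finset.mem_insert]; omega
  have h1 : ∑ i ∈ Finset.Icc (1 : ℤ) (M : ℤ), f (i + 1)
      = ∑ i ∈ Finset.Icc ((1 : ℤ) + 1) ((M : ℤ) + 1), f i := by
    rw [← Finset.map_add_right_Icc, Finset.sum_map]
    rfl
  rw [h1, show (1 : ℤ) + 1 = 2 by norm_num, e2, Finset.sum_insert (by simp), e1,
    Finset.sum_insert (by simp)]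
  rw [show (M : ℤ) + 1 = 1 + (M : ℤ) by ring, hf 1]

lemma sum_tele' (M : ℕ) (hM : 0 < M) (g : ℤ → ℝ) (hg : ∀ i : ℤ, g (i + (M : ℤ)) = g i)
    (f : ℤ → ℝ) (hf : ∀ i ∈ Finset.Icc (1 : ℤ) (M : ℤ), f i = g (i + 1) - g i) :
    ∑ i ∈ Finset.Icc (1 : ℤ) (M : ℤ), f i = 0 := by
  rw [Finset.sum_congr rfl hf, Finset.sum_sub_distrib, sum_shift M hM g hg, sub_self]

end Aux
section Aux2

variable {M : ℕ} {h : ℝ}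

lemma per_shift {u : ℤ → ℝ} (hu : Periodic M u) (j : ℤ) (c : ℤ) : u (j + (M : ℤ) + c) = u (j + c) := by
  rw [show j + (M : ℤ) + c = (j + c) + (M : ℤ) by ring]; exact hu _

lemma per_sub1 {u : ℤ → ℝ} (hu : Periodic M u) (j : ℤ) : u (j + (M : ℤ) - 1) = u (j - 1) := by
  rw [show j + (M : ℤ) - 1 = (j - 1) + (M : ℤ) by ring]; exact hu _

lemma per_dxm {u : ℤ → ℝ} (hu : Periodic M u) : Periodic M (dxm h u) := by
  intro i; unfold dxm; rw [hu i, per_sub1 hu]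

lemma per_Dx {u : ℤ → ℝ} (hu : Periodic M u) : Periodic M (Dx h u) := by
  intro i; unfold Dx; rw [per_shift hu i 1, per_sub1 hu]

lemma per_dxx {u : ℤ → ℝ} (hu : Periodic M u) : Periodic M (dxx h u) := by
  intro i; unfold dxx; rw [per_shift hu i 1, per_sub1 hu, hu i]

lemma per_mul {u w : ℤ → ℝ} (hu : Periodic M u) (hw : Periodic M w) :
    Periodic M (fun i => u i * w i) := by
  intro i; dsimp only; rw [hu i, hw i]

lemma per_psi {a w : ℤ → ℝ} (ha : Periodic M a) (hw : Periodic M w) :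
    Periodic M (psi h a w) := by
  intro i; unfold psi; rw [ha i, per_Dx hw i, per_Dx (per_mul ha hw) i]

lemma per_half {a b : ℤ → ℝ} (ha : Periodic M a) (hb : Periodic M b) :
    Periodic M (half a b) := by
  intro i; unfold half; rw [ha i, hb i]

lemma ip_sym (M : ℕ) (h : ℝ) (a b : ℤ → ℝ) : ip M h a b = ip M h b a := by
  unfold ip; congr 1; exact Finset.sum_congr rfl fun i _ => mul_comm _ _

lemma dip_sym (M : ℕ) (h : ℝ) (a b : ℤ → ℝ) : dip M h a b = dip M h b a := by
  unfold dip; congr 1; exact Finset.sum_congr rfl fun i _ => mul_comm _ _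

lemma ip_nonneg (M : ℕ) {h : ℝ} (hh : 0 < h) (a : ℤ → ℝ) : 0 ≤ ip M h a a :=
  mul_nonneg hh.le (Finset.sum_nonneg fun i _ => mul_self_nonneg _)

lemma dip_nonneg (M : ℕ) {h : ℝ} (hh : 0 < h) (a : ℤ → ℝ) : 0 ≤ dip M h a a :=
  mul_nonneg hh.le (Finset.sum_nonneg fun i _ => mul_self_nonneg _)

lemma ip_congr (M : ℕ) (h : ℝ) (f g b : ℤ → ℝ) (hfg : ∀ i, f i = g i) :
    ip M h f b = ip M h g b := by
  unfold ip; congr 1; exact Finset.sum_congr rfl fun i _ => by rw [hfg i]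

lemma ip_sub_smul (M : ℕ) (h c : ℝ) (f g b : ℤ → ℝ) :
    ip M h (fun i => f i - c * g i) b = ip M h f b - c * ip M h g b := by
  unfold ip
  simp only [sub_mul, mul_assoc, Finset.sum_sub_distrib, ← Finset.mul_sum]
  ring

lemma ip_add_smul (M : ℕ) (h c : ℝ) (f g b : ℤ → ℝ) :
    ip M h (fun i => f i + c * g i) b = ip M h f b + c * ip M h g b := by
  unfold ip
  simp only [add_mul, mul_assoc, Finset.sum_add_distrib, ← Finset.mul_sum]
  ring

end Aux2
section Aux3

variable {M : ℕ} {h : ℝ}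

lemma Dx_skew (hM : 0 < M) (hh : h ≠ 0) {a b : ℤ → ℝ}
    (ha : Periodic M a) (hb : Periodic M b) :
    ip M h (Dx h a) b + ip M h a (Dx h b) = 0 := by
  unfold ip
  rw [← mul_add, ← Finset.sum_add_distrib,
    sum_tele' M hM (fun j => (a (j - 1) * b j + a j * b (j - 1)) / (2 * h))
      (fun j => by rw [per_sub1 ha, ha j, per_sub1 hb, hb j])
      _ (fun i _ => by rw [iz1]; unfold Dx; field_simp; ring), mul_zero]

lemma Dx_self (hM : 0 < M) (hh : h ≠ 0) {a : ℤ → ℝ} (ha : Periodic M a) :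
    ip M h a (Dx h a) = 0 := by
  have h1 := Dx_skew hM hh ha ha
  have h2 := ip_sym M h (Dx h a) a
  linarith

lemma sbp (hM : 0 < M) (hh : h ≠ 0) {a b : ℤ → ℝ}
    (ha : Periodic M a) (hb : Periodic M b) :
    ip M h (dxx h a) b + dip M h a b = 0 := by
  unfold ip dip
  rw [← mul_add, ← Finset.sum_add_distrib,
    sum_tele' M hM (fun j => dxm h a j * b (j - 1) / h)
      (fun j => by rw [per_dxm ha j, per_sub1 hb])
      _ (fun i _ => by rw [iz1]; unfold dxx dxm; field_simp; ring), mul_zero]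

lemma dip_Dx_self (hM : 0 < M) (hh : h ≠ 0) {a : ℤ → ℝ} (ha : Periodic M a) :
    dip M h a (Dx h a) = 0 := by
  have hf : ∀ i ∈ Finset.Icc (1 : ℤ) (M : ℤ), dxm h a i * dxm h (Dx h a) i =
      (fun j => dxm h a (j - 1) * dxm h a j / (2 * h)) (i + 1)
        - (fun j => dxm h a (j - 1) * dxm h a j / (2 * h)) i := by
    intro i _
    dsimp only
    rw [iz1]
    unfold dxm Dx
    simp only [iz1, iz2, iz3, iz4]
    field_simp
    ring
  unfold dip
  rw [sum_tele' M hM (fun j => dxm h a (j - 1) * dxm h a j / (2 * h))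
      (fun j => by rw [per_sub1 (per_dxm ha), per_dxm ha j]) _ hf, mul_zero]

lemma psi_skew (hM : 0 < M) (hh : h ≠ 0) {a w : ℤ → ℝ}
    (ha : Periodic M a) (hw : Periodic M w) :
    ip M h (psi h a w) w = 0 := by
  unfold ip
  rw [sum_tele' M hM (fun j => w (j - 1) * w j * (a (j - 1) + a j) / (6 * h))
      (fun j => by rw [per_sub1 hw, hw j, per_sub1 ha, ha j])
      _ (fun i _ => by rw [iz1]; unfold psi Dx; field_simp; ring), mul_zero]

end Aux3
section Aux4

variable {M : ℕ} {h : ℝ}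

lemma inv_ineq (hM : 0 < M) (hh : 0 < h) {a : ℤ → ℝ} (ha : Periodic M a) :
    dip M h a a ≤ 4 / h ^ 2 * ip M h a a := by
  have hpt : ∀ i ∈ Finset.Icc (1 : ℤ) (M : ℤ), dxm h a i * dxm h a i ≤
      2 / h ^ 2 * (a i * a i) + 2 / h ^ 2 * (a (i - 1) * a (i - 1)) := by
    intro i _
    unfold dxm
    have h1 : (a i - a (i - 1)) ^ 2 ≤ 2 * (a i * a i) + 2 * (a (i-1) * a (i-1)) := by
      nlinarith [sq_nonneg (a i + a (i - 1))]
    have h2 : (0:ℝ) < h ^ 2 := by positivity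
    calc (a i - a (i-1)) / h * ((a i - a (i-1)) / h) = (a i - a (i-1))^2 / h^2 := by
          field_simp
      _ ≤ (2 * (a i * a i) + 2 * (a (i-1) * a (i-1))) / h^2 := by gcongr
      _ = 2 / h ^ 2 * (a i * a i) + 2 / h ^ 2 * (a (i-1) * a (i-1)) := by
          field_simp
          try ring
  have hshift : ∑ i ∈ Finset.Icc (1 : ℤ) (M : ℤ), a (i - 1) * a (i - 1)
      = ∑ i ∈ Finset.Icc (1 : ℤ) (M : ℤ), a i * a i := by
    have hs := sum_shift M hM (fun j => a (j - 1) * a (j - 1))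
      (fun j => by rw [per_sub1 ha])
    rw [← hs]
    exact Finset.sum_congr rfl fun i _ => by rw [iz1]
  have hsum := Finset.sum_le_sum hpt
  rw [Finset.sum_add_distrib, ← Finset.mul_sum, ← Finset.mul_sum, hshift] at hsum
  unfold dip ip
  calc h * ∑ i ∈ Finset.Icc (1 : ℤ) (M : ℤ), dxm h a i * dxm h a i
      ≤ h * (2 / h ^ 2 * ∑ i ∈ Finset.Icc (1 : ℤ) (M : ℤ), a i * a i
          + 2 / h ^ 2 * ∑ i ∈ Finset.Icc (1 : ℤ) (M : ℤ), a i * a i) := by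
        exact mul_le_mul_of_nonneg_left hsum hh.le
    _ = 4 / h ^ 2 * (h * ∑ i ∈ Finset.Icc (1 : ℤ) (M : ℤ), a i * a i) := by
        field_simp
        try ring

/-- The compact relation. -/
def Rel (M : ℕ) (h : ℝ) (u v : ℤ → ℝ) : Prop :=
  Periodic M u ∧ Periodic M v ∧ ∀ i : ℤ, v i = dxx h u i - h ^ 2 / 12 * dxx h v i

lemma compact_pair (hM : 0 < M) (hh : h ≠ 0) {u1 v1 u2 v2 : ℤ → ℝ}
    (h1 : Rel M h u1 v1) (h2 : Rel M h u2 v2) :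
    ip M h v1 u2 = -dip M h u1 u2 - h ^ 2 / 12 * ip M h v1 v2
      + h ^ 4 / 144 * dip M h v1 v2 := by
  obtain ⟨hu1, hv1, hr1⟩ := h1
  obtain ⟨hu2, hv2, hr2⟩ := h2
  have e0 : ip M h v1 u2 = ip M h (dxx h u1) u2 - h ^ 2 / 12 * ip M h (dxx h v1) u2 := by
    rw [ip_congr M h v1 (fun i => dxx h u1 i - h ^ 2 / 12 * dxx h v1 i) u2 hr1,
      ip_sub_smul]
  have e1 : ip M h (dxx h u1) u2 = -dip M h u1 u2 := by
    have := sbp hM hh hu1 hu2; linarith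
  have e2 : ip M h (dxx h v1) u2 = ip M h (dxx h u2) v1 := by
    have s1 := sbp hM hh hv1 hu2
    have s2 := sbp hM hh hu2 hv1
    have s3 := dip_sym M h v1 u2
    linarith
  have e3 : ip M h (dxx h u2) v1 = ip M h v2 v1 + h ^ 2 / 12 * ip M h (dxx h v2) v1 := by
    rw [ip_congr M h (dxx h u2) (fun i => v2 i + h ^ 2 / 12 * dxx h v2 i) v1
      (fun i => by rw [hr2 i]; ring), ip_add_smul]
  have e4 : ip M h (dxx h v2) v1 = -dip M h v2 v1 := by
    have := sbp hM hh hv2 hv1; linarith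
  rw [e0, e1, e2, e3, e4, ip_sym M h v2 v1, dip_sym M h v2 v1]
  ring

lemma compact_sym (hM : 0 < M) (hh : h ≠ 0) {u1 v1 u2 v2 : ℤ → ℝ}
    (h1 : Rel M h u1 v1) (h2 : Rel M h u2 v2) :
    ip M h v1 u2 = ip M h v2 u1 := by
  rw [compact_pair hM hh h1 h2, compact_pair hM hh h2 h1,
    dip_sym M h u2 u1, ip_sym M h v2 v1, dip_sym M h v2 v1]

lemma dissip_nonpos (hM : 0 < M) (hh : 0 < h) {u v : ℤ → ℝ} (hr : Rel M h u v) :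
    ip M h v u ≤ 0 := by
  rw [compact_pair hM hh.ne' hr hr]
  have h1 : dip M h v v ≤ 4 / h ^ 2 * ip M h v v := inv_ineq hM hh hr.2.1
  have h2 : 0 ≤ dip M h u u := dip_nonneg M hh u
  have h3 : 0 ≤ ip M h v v := ip_nonneg M hh v
  have h4 : h ^ 4 / 144 * dip M h v v ≤ h ^ 4 / 144 * (4 / h ^ 2 * ip M h v v) := by
    apply mul_le_mul_of_nonneg_left h1; positivity
  have h5 : h ^ 4 / 144 * (4 / h ^ 2 * ip M h v v) = h ^ 2 / 36 * ip M h v v := by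
    field_simp; ring
  have h6 : h ^ 2 / 36 * ip M h v v ≤ h ^ 2 / 12 * ip M h v v := by
    apply mul_le_mul_of_nonneg_right _ h3
    nlinarith [sq_nonneg h]
  linarith

end Aux4
section Aux5

variable {M : ℕ} {h : ℝ}

lemma Rel_Dx (hh : h ≠ 0) {u v : ℤ → ℝ} (hr : Rel M h u v) :
    Rel M h (Dx h u) (Dx h v) := by
  obtain ⟨hu, hv, hrel⟩ := hr
  refine ⟨per_Dx hu, per_Dx hv, fun i => ?_⟩
  have e1 := hrel (i + 1)
  have e2 := hrel (i - 1)
  unfold Dx dxx at *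
  simp only [iz1, iz2, iz3, iz4] at *
  linear_combination (e1 - e2) / (2 * h)
lemma Rel_half {u0 v0 u1 v1 : ℤ → ℝ} (h0 : Rel M h u0 v0) (h1 : Rel M h u1 v1) :
    Rel M h (half u0 u1) (half v0 v1) := by
  obtain ⟨hu0, hv0, hr0⟩ := h0
  obtain ⟨hu1, hv1, hr1⟩ := h1
  refine ⟨per_half hu0 hu1, per_half hv0 hv1, fun i => ?_⟩
  simp only [half]
  rw [hr0 i, hr1 i]
  unfold dxx half
  ring

lemma Dxz_zero (hM : 0 < M) (hh : h ≠ 0) {w z : ℤ → ℝ} (hr : Rel M h w z) :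
    ip M h (Dx h z) w = 0 := by
  have hw := hr.1
  have hz := hr.2.1
  have h1 := Dx_skew hM hh hz hw
  have h2 : ip M h z (Dx h w) = -dip M h w (Dx h w)
      - h ^ 2 / 12 * ip M h z (Dx h z) + h ^ 4 / 144 * dip M h z (Dx h z) :=
    compact_pair hM hh hr (Rel_Dx hh hr)
  rw [dip_Dx_self hM hh hw, Dx_self hM hh hz, dip_Dx_self hM hh hz] at h2
  linarith

end Aux5
section Aux6

lemma energy_step (M : ℕ) (h τ' μ γ κ ν : ℝ) (hM : 0 < M) (hh : 0 < h)
    (hτ' : 0 < τ') (hν : 0 ≤ ν) (a va b vb c vc : ℤ → ℝ)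
    (hra : Rel M h a va) (hrb : Rel M h b vb)
    (hpc : Periodic M c) (hpvc : Periodic M vc)
    (heq : ∀ i : ℤ, (b i - a i) / (2 * τ') - μ * (vb i - va i) / (2 * τ')
      + γ * (psi h c (half a b) i - h ^ 2 / 2 * psi h vc (half a b) i)
      + κ * (Dx h (half a b) i - h ^ 2 / 6 * Dx h (half va vb) i)
      - ν * half va vb i = 0) :
    ip M h b b - μ * ip M h vb b ≤ ip M h a a - μ * ip M h va a := by
  have hτ0 : τ' ≠ 0 := ne_of_gt hτ'
  obtain ⟨hpa, hpva, -⟩ := id hra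
  obtain ⟨hpb, hpvb, -⟩ := id hrb
  have hw : Periodic M (half a b) := per_half hpa hpb
  have hzp : Periodic M (half va vb) := per_half hpva hpvb
  have hrw : Rel M h (half a b) (half va vb) := Rel_half hra hrb
  have z1 : ip M h (psi h c (half a b)) (half a b) = 0 := psi_skew hM hh.ne' hpc hw
  have z2 : ip M h (psi h vc (half a b)) (half a b) = 0 := psi_skew hM hh.ne' hpvc hw
  have z3 : ip M h (Dx h (half a b)) (half a b) = 0 := by
    rw [ip_sym]; exact Dx_self hM hh.ne' hw
  have z4 : ip M h (Dx h (half va vb)) (half a b) = 0 := Dxz_zero hM hh.ne' hrw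
  have z5 : ip M h vb a = ip M h va b := compact_sym hM hh.ne' hrb hra
  have key : (ip M h b b - ip M h a a)
      - μ * (ip M h vb b + ip M h vb a - ip M h va b - ip M h va a)
      + (4 * τ' * γ) * (ip M h (psi h c (half a b)) (half a b)
          - h ^ 2 / 2 * ip M h (psi h vc (half a b)) (half a b))
      + (4 * τ' * κ) * (ip M h (Dx h (half a b)) (half a b)
          - h ^ 2 / 6 * ip M h (Dx h (half va vb)) (half a b))
      - (4 * τ' * ν) * ip M h (half va vb) (half a b) = 0 := by
    have h1 : ∀ i ∈ Finset.Icc (1 : ℤ) (M : ℤ),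
        b i * b i - a i * a i
        - μ * (vb i * b i) - μ * (vb i * a i) + μ * (va i * b i) + μ * (va i * a i)
        + (4 * τ' * γ) * (psi h c (half a b) i * half a b i)
        - (4 * τ' * γ) * (h ^ 2 / 2) * (psi h vc (half a b) i * half a b i)
        + (4 * τ' * κ) * (Dx h (half a b) i * half a b i)
        - (4 * τ' * κ) * (h ^ 2 / 6) * (Dx h (half va vb) i * half a b i)
        - (4 * τ' * ν) * (half va vb i * half a b i)
        = (4 * τ') * (((b i - a i) / (2 * τ') - μ * (vb i - va i) / (2 * τ')
            + γ * (psi h c (half a b) i - h ^ 2 / 2 * psi h vc (half a b) i)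
            + κ * (Dx h (half a b) i - h ^ 2 / 6 * Dx h (half va vb) i)
            - ν * half va vb i) * half a b i) := by
      intro i _
      simp only [half]
      field_simp
      ring
    calc (ip M h b b - ip M h a a)
        - μ * (ip M h vb b + ip M h vb a - ip M h va b - ip M h va a)
        + (4 * τ' * γ) * (ip M h (psi h c (half a b)) (half a b)
            - h ^ 2 / 2 * ip M h (psi h vc (half a b)) (half a b))
        + (4 * τ' * κ) * (ip M h (Dx h (half a b)) (half a b)
            - h ^ 2 / 6 * ip M h (Dx h (half va vb)) (half a b))
        - (4 * τ' * ν) * ip M h (half va vb) (half a b)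
        = h * ∑ i ∈ Finset.Icc (1 : ℤ) (M : ℤ),
            (b i * b i - a i * a i
            - μ * (vb i * b i) - μ * (vb i * a i) + μ * (va i * b i) + μ * (va i * a i)
            + (4 * τ' * γ) * (psi h c (half a b) i * half a b i)
            - (4 * τ' * γ) * (h ^ 2 / 2) * (psi h vc (half a b) i * half a b i)
            + (4 * τ' * κ) * (Dx h (half a b) i * half a b i)
            - (4 * τ' * κ) * (h ^ 2 / 6) * (Dx h (half va vb) i * half a b i)
            - (4 * τ' * ν) * (half va vb i * half a b i)) := by
          simp only [ip, Finset.sum_add_distrib, Finset.sum_sub_distrib, ← Finset.mul_sum]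
          ring
      _ = h * ∑ i ∈ Finset.Icc (1 : ℤ) (M : ℤ),
            (4 * τ') * (((b i - a i) / (2 * τ') - μ * (vb i - va i) / (2 * τ')
            + γ * (psi h c (half a b) i - h ^ 2 / 2 * psi h vc (half a b) i)
            + κ * (Dx h (half a b) i - h ^ 2 / 6 * Dx h (half va vb) i)
            - ν * half va vb i) * half a b i) := by
          rw [Finset.sum_congr rfl h1]
      _ = 0 := by
          rw [Finset.sum_eq_zero, mul_zero]
          intro i _
          rw [heq i]
          ring
  rw [z1, z2, z3, z4, z5] at key
  have hzw : ip M h (half va vb) (half a b) ≤ 0 := dissip_nonpos hM hh hrw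
  have h4 : (4 * τ' * ν) * ip M h (half va vb) (half a b) ≤ 0 :=
    mul_nonpos_of_nonneg_of_nonpos (by positivity) hzw
  linarith

end Aux6
/-- Boundedness of the numerical solution (remark following Theorem 4.1). -/
theorem solution_boundedness (M N : ℕ) (h τ μ γ κ ν : ℝ) (u v : ℕ → ℤ → ℝ)
    (hM : 0 < M) (hN : 0 < N) (hh : 0 < h) (hτ : 0 < τ)
    (hμ : 0 ≤ μ) (hγ : 0 ≤ γ) (hν : 0 ≤ ν)
    (hscheme : SatisfiesScheme M N h τ μ γ κ ν u v) :
    ∀ k : ℕ, 1 ≤ k → k ≤ N →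
      (nrm M h (u k)) ^ 2 ≤
        2 * ((nrm M h (u 0)) ^ 2 + μ * (snorm M h (u 0)) ^ 2
          + μ * h ^ 2 / 12 * (nrm M h (v 0)) ^ 2
          - μ * h ^ 4 / 144 * (snorm M h (v 0)) ^ 2) := by
  obtain ⟨hper, hrel, hfirst, hstep⟩ := hscheme
  have hR : ∀ k, k ≤ N → Rel M h (u k) (v k) :=
    fun k hk => ⟨(hper k hk).1, (hper k hk).2, hrel k hk⟩
  have main : ∀ k, k ≤ N →
      ip M h (u k) (u k) - μ * ip M h (v k) (u k)
        ≤ ip M h (u 0) (u 0) - μ * ip M h (v 0) (u 0) := by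
    intro k
    induction k using Nat.strong_induction_on with
    | _ k ih =>
      intro hk
      match k with
      | 0 => exact le_rfl
      | 1 =>
        have heq1 : ∀ i : ℤ, (u 1 i - u 0 i) / (2 * (τ / 2))
            - μ * (v 1 i - v 0 i) / (2 * (τ / 2))
            + γ * (psi h (u 0) (half (u 0) (u 1)) i
                - h ^ 2 / 2 * psi h (v 0) (half (u 0) (u 1)) i)
            + κ * (Dx h (half (u 0) (u 1)) i - h ^ 2 / 6 * Dx h (half (v 0) (v 1)) i)
            - ν * half (v 0) (v 1) i = 0 := by
          intro i
          rw [show (2 : ℝ) * (τ / 2) = τ by ring]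
          exact hfirst i
        exact energy_step M h (τ / 2) μ γ κ ν hM hh (by positivity) hν
          (u 0) (v 0) (u 1) (v 1) (u 0) (v 0)
          (hR 0 (by omega)) (hR 1 (by omega))
          (hper 0 (by omega)).1 (hper 0 (by omega)).2 heq1
      | (m + 2) =>
        refine le_trans ?_ (ih m (by omega) (by omega))
        exact energy_step M h τ μ γ κ ν hM hh hτ hν
          (u m) (v m) (u (m + 2)) (v (m + 2)) (u (m + 1)) (v (m + 1))
          (hR m (by omega)) (hR (m + 2) (by omega))
          (hper (m + 1) (by omega)).1 (hper (m + 1) (by omega)).2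
          (hstep (m + 1) (by omega) (by omega))
  intro k hk1 hkN
  have e1 : nrm M h (u k) ^ 2 = ip M h (u k) (u k) := Real.sq_sqrt (ip_nonneg M hh _)
  have e2 : nrm M h (u 0) ^ 2 = ip M h (u 0) (u 0) := Real.sq_sqrt (ip_nonneg M hh _)
  have e3 : snorm M h (u 0) ^ 2 = dip M h (u 0) (u 0) := Real.sq_sqrt (dip_nonneg M hh _)
  have e4 : nrm M h (v 0) ^ 2 = ip M h (v 0) (v 0) := Real.sq_sqrt (ip_nonneg M hh _)
  have e5 : snorm M h (v 0) ^ 2 = dip M h (v 0) (v 0) := Real.sq_sqrt (dip_nonneg M hh _)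
  rw [e1, e2, e3, e4, e5]
  have id0 : ip M h (v 0) (u 0) = -dip M h (u 0) (u 0) - h ^ 2 / 12 * ip M h (v 0) (v 0)
      + h ^ 4 / 144 * dip M h (v 0) (v 0) :=
    compact_pair hM hh.ne' (hR 0 (by omega)) (hR 0 (by omega))
  have id0μ : μ * ip M h (v 0) (u 0) = -(μ * dip M h (u 0) (u 0))
      - μ * h ^ 2 / 12 * ip M h (v 0) (v 0) + μ * h ^ 4 / 144 * dip M h (v 0) (v 0) := by
    rw [id0]; ring
  have hd0 : μ * ip M h (v 0) (u 0) ≤ 0 :=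
    mul_nonpos_of_nonneg_of_nonpos hμ (dissip_nonpos hM hh (hR 0 (by omega)))
  have hdk : μ * ip M h (v k) (u k) ≤ 0 :=
    mul_nonpos_of_nonneg_of_nonpos hμ (dissip_nonpos hM hh (hR k hkN))
  have h00 : 0 ≤ ip M h (u 0) (u 0) := ip_nonneg M hh _
  have hFk := main k hkN
  linarith

end BBMB
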